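/- Let m ≥ 2, n ≥ 2k, 3 ≤ k ≤ ⌊n/2⌋ and 0 ≤ h < n−2k. Then the set S^(k,h)_{m×n} ∪ S^(k,h+1)_{m×n} is non-overlapping: every matrix in the union is self non-overlapping, and any two distinct matrices in the union are non-overlapping. -/

import Mathlib

/-- A binary string (list of booleans, `false` = 0, `true` = 1) avoids `0^k`
and `1^k`, i.e. it contains neither `k` consecutive 0's nor `k` consecutive 1's. -/
def Avoids (k : ℕ) (s : List Bool) : Prop :=
  ¬ (List.replicate k false <:+: s) ∧ ¬ (List.replicate k true <:+: s)
/-- `(p, q)` is an overlap of `B` on `A`: a nonzero integer shift with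
`|p| ≤ m−1`, `|q| ≤ n−1` such that `A (i,j) = B (i+p, j+q)` whenever both
`(i,j)` and `(i+p, j+q)` are valid positions. -/
def IsOverlap {m n : ℕ} (A B : Fin m → Fin n → Bool) (p q : ℤ) : Prop :=
  ¬ (p = 0 ∧ q = 0) ∧ p.natAbs ≤ m - 1 ∧ q.natAbs ≤ n - 1 ∧
    ∀ (i : Fin m) (j : Fin n) (i' : Fin m) (j' : Fin n),
      (i' : ℤ) = (i : ℤ) + p → (j' : ℤ) = (j : ℤ) + q → A i j = B i' j'
/-- The `i`-th row (0-indexed) of an `m × n` binary matrix, read as a binary string. -/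
def row {m n : ℕ} (A : Fin m → Fin n → Bool) (i : ℕ) : List Bool :=
  List.ofFn (fun j : Fin n => if h : i < m then A ⟨i, h⟩ j else false)
/-- The set `S^(k,h)_{m×n}`: binary `m × n` matrices whose first row is
`1^h 1^{k−1} 0 w 1 0^{k−1}` (with `0w1` of length `n−2k+2−h` avoiding `0^k` and
`1^k`), whose middle rows end with `0` and avoid `0^k` and `1^k`, and whose last
row is `1^h 1^k v 0^k` (with `v` of length `n−2k−h` avoiding `0^k` and `1^k`). -/
def SkhSet (m n k h : ℕ) : Set (Fin m → Fin n → Bool) :=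
  {A |
    (∃ v : List Bool, v.length = n - 2*k + 2 - h ∧ Avoids k v ∧
        v.head? = some false ∧ v.getLast? = some true ∧
        row A 0 = List.replicate (h + (k-1)) true ++ v ++ List.replicate (k-1) false) ∧
    (∀ i : ℕ, 1 ≤ i → i ≤ m - 2 → Avoids k (row A i) ∧ (row A i).getLast? = some false) ∧
    (∃ v : List Bool, v.length = n - 2*k - h ∧ Avoids k v ∧
        row A (m-1) = List.replicate (h + k) true ++ v ++ List.replicate k false)}

/-- `S^(k,h)_{m×n} ∪ S^(k,h+1)_{m×n}` is a non-overlapping set. -/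
def entry {m n : ℕ} (A : Fin m → Fin n → Bool) (i j : ℕ) : Bool :=
  if h : i < m ∧ j < n then A ⟨i, h.1⟩ ⟨j, h.2⟩ else false

lemma row_length {m n : ℕ} (A : Fin m → Fin n → Bool) (i : ℕ) : (row A i).length = n := by
  simp [row]

lemma entry_eq_get {m n : ℕ} (A : Fin m → Fin n → Bool) {i j : ℕ} (hi : i < m) (hj : j < n) :
    entry A i j = (row A i)[j]'(by simp [row_length, hj]) := by
  simp [entry, row, hi, hj]

lemma use_overlap {m n : ℕ} {A B : Fin m → Fin n → Bool} {p q : ℤ}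
    (O : IsOverlap A B p q) {i j i' j' : ℕ} (hi : i < m) (hj : j < n)
    (hi' : i' < m) (hj' : j' < n) (hpi : (i' : ℤ) = i + p) (hqj : (j' : ℤ) = j + q) :
    entry A i j = entry B i' j' := by
  have := O.2.2.2 ⟨i, hi⟩ ⟨j, hj⟩ ⟨i', hi'⟩ ⟨j', hj'⟩ (by simpa using hpi) (by simpa using hqj)
  simp [entry, hi, hj, hi', hj', this]

lemma window_infix {v : List Bool} {c : Bool} {s k : ℕ} (hs : s + k ≤ v.length)
    (hall : ∀ r, (hr : r < k) → v[s+r]'(by omega) = c) : List.replicate k c <:+: v := by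
  have h1 : (v.drop s).take k = List.replicate k c := by
    apply List.ext_getElem
    · simp; omega
    · intro i h1 h2
      have hik : i < k := by simpa using h2
      simp only [List.getElem_take, List.getElem_drop, List.getElem_replicate]
      exact hall i hik
  rw [← h1]
  exact ((List.take_prefix _ _).isInfix).trans ((List.drop_suffix _ _).isInfix)

lemma getElem_trip {a b : ℕ} {v : List Bool} {j : ℕ} (hj : j < a + v.length + b) :
    (List.replicate a true ++ v ++ List.replicate b false)[j]'(by simp; omega) =
      if hja : j < a then true
      else if hjv : j < a + v.length then v[j - a]'(by omega)
      else false := by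
  split_ifs with h1 h2
  · rw [List.getElem_append_left (by simp; omega), List.getElem_append_left (by simp; omega)]
    simp
  · rw [List.getElem_append_left (by simp; omega), List.getElem_append_right (by simp; omega)]
    simp
  · rw [List.getElem_append_right (by simp; omega)]
    simp

lemma gidx {α} {l : List α} {i j : ℕ} (hi : i < l.length) (hj : j < l.length) (hij : i = j) :
    l[i]'hi = l[j]'hj := by subst hij; rfl

lemma entry_trip {m n : ℕ} {A : Fin m → Fin n → Bool} {i a b : ℕ} {v : List Bool}
    (hi : i < m)
    (hrow : row A i = List.replicate a true ++ v ++ List.replicate b false) :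
    a + v.length + b = n ∧
    (∀ j, j < a → entry A i j = true) ∧
    (∀ j, (h1 : a ≤ j) → (h2 : j < a + v.length) → entry A i j = v[j - a]'(by omega)) ∧
    (∀ j, a + v.length ≤ j → j < n → entry A i j = false) := by
  have hlen : a + v.length + b = n := by
    have h := row_length A i
    rw [hrow] at h; simp at h; omega
  refine ⟨hlen, ?_, ?_, ?_⟩
  · intro j hj
    rw [entry_eq_get A hi (by omega), List.getElem_of_eq hrow, getElem_trip (by omega),
      dif_pos hj]
  · intro j h1 h2
    rw [entry_eq_get A hi (by omega), List.getElem_of_eq hrow, getElem_trip (by omega),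
      dif_neg (by omega), dif_pos h2]
  · intro j h1 h2
    rw [entry_eq_get A hi h2, List.getElem_of_eq hrow, getElem_trip (by omega),
      dif_neg (by omega), dif_neg (by omega)]

structure Facts (m n k g : ℕ) (A : Fin m → Fin n → Bool) : Prop where
  lastcol : ∀ i, i < m → entry A i (n-1) = false
  row0_one : ∀ j, j + 2 ≤ g + k → entry A 0 j = true
  row0_zero_at : entry A 0 (g+k-1) = false
  row0_one_at : entry A 0 (n-k) = true
  row0_trail : ∀ j, n-k+1 ≤ j → j < n → entry A 0 j = false
  row0_no_zeros : ∀ s, s + k ≤ n → ¬ (∀ r, r < k → entry A 0 (s+r) = false)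
  row0_no_ones_mid : ∀ s, g+k-1 ≤ s → s + k ≤ n-k+1 → ¬ (∀ r, r < k → entry A 0 (s+r) = true)
  mid_no_zeros : ∀ i, 1 ≤ i → i ≤ m-2 → ∀ s, s+k ≤ n → ¬(∀ r, r < k → entry A i (s+r) = false)
  mid_no_ones : ∀ i, 1 ≤ i → i ≤ m-2 → ∀ s, s+k ≤ n → ¬(∀ r, r < k → entry A i (s+r) = true)
  last_one : ∀ j, j < g + k → entry A (m-1) j = true
  last_trail : ∀ j, n-k ≤ j → j < n → entry A (m-1) j = false
  last_no_zeros_mid : ∀ s, g+k ≤ s → s+k ≤ n-k → ¬(∀ r, r < k → entry A (m-1) (s+r) = false)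

lemma facts_of_mem {m n k g : ℕ} {A : Fin m → Fin n → Bool} (hm : 2 ≤ m) (hk : 3 ≤ k)
    (hg : g + 2*k ≤ n) (hA : A ∈ SkhSet m n k g) : Facts m n k g A := by
  obtain ⟨⟨v0, hv0len, hv0av, hv0hd, hv0lst, hrow0⟩, hmid, ⟨v1, hv1len, hv1av, hrow1⟩⟩ := hA
  have h0m : 0 < m := by omega
  have hm1 : m - 1 < m := by omega
  obtain ⟨hL0, get0a, get0b, get0c⟩ := entry_trip h0m hrow0
  obtain ⟨hL1, get1a, get1b, get1c⟩ := entry_trip hm1 hrow1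
  have hv0ne : v0 ≠ [] := by intro h; rw [h] at hL0; simp at hL0; omega
  have hv0hd' : v0[0]'(by omega) = false := by
    rw [List.getElem_zero]
    rwa [List.head?_eq_head hv0ne, Option.some_inj] at hv0hd
  have hv0lst' : v0[v0.length - 1]'(by omega) = true := by
    rw [← List.getLast_eq_getElem hv0ne]
    rwa [List.getLast?_eq_getLast_of_ne_nil hv0ne, Option.some_inj] at hv0lst
  have midlast : ∀ i, 1 ≤ i → i ≤ m - 2 → entry A i (n-1) = false := by
    intro i hi1 hi2
    have hne : row A i ≠ [] := by
      intro h
      have := row_length A i; rw [h] at this; simp at this; omega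
    have h := (hmid i hi1 hi2).2
    rw [List.getLast?_eq_getLast_of_ne_nil hne, Option.some_inj] at h
    rw [entry_eq_get A (by omega) (by omega), List.getLast_eq_getElem hne] at *
    exact (gidx _ _ (by rw [row_length])).trans h
  constructor
  case row0_one =>
    intro j hjg
    exact get0a j (by omega)
  case row0_zero_at =>
    rw [get0b (g+k-1) (by omega) (by omega)]
    exact (gidx _ _ (by omega)).trans hv0hd'
  case row0_one_at =>
    rw [get0b (n-k) (by omega) (by omega)]
    exact (gidx _ _ (by omega)).trans hv0lst'
  case row0_trail =>
    intro j hj1 hj2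
    exact get0c j (by omega) hj2
  case row0_no_zeros =>
    intro s hs hall
    have hsa : g + (k-1) ≤ s := by
      by_contra hc
      have h := hall 0 (by omega)
      rw [Nat.add_zero, get0a s (by omega)] at h
      simp at h
    by_cases hend : s + k ≤ n - k
    · refine hv0av.1 (window_infix (v := v0) (s := s - (g+(k-1))) (by omega) ?_)
      intro r hr
      have h := hall r hr
      rw [get0b (s+r) (by omega) (by omega)] at h
      exact (gidx _ _ (by omega)).trans h
    · have h := hall (n-k-s) (by omega)
      rw [show s + (n-k-s) = n-k by omega, get0b (n-k) (by omega) (by omega)] at h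
      have h2 := (gidx (l := v0) (i := v0.length - 1) (j := n - k - (g+(k-1)))
        (by omega) (by omega) (by omega)).trans h
      rw [hv0lst'] at h2
      simp at h2
  case row0_no_ones_mid =>
    intro s hs1 hs2 hall
    refine hv0av.2 (window_infix (v := v0) (s := s - (g+(k-1))) (by omega) ?_)
    intro r hr
    have h := hall r hr
    rw [get0b (s+r) (by omega) (by omega)] at h
    exact (gidx _ _ (by omega)).trans h
  case mid_no_zeros =>
    intro i hi1 hi2 s hs hall
    refine (hmid i hi1 hi2).1.1 (window_infix (v := row A i) (s := s) (by rw [row_length]; omega) ?_)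
    intro r hr
    have h := hall r hr
    rwa [entry_eq_get A (by omega) (by omega)] at h
  case mid_no_ones =>
    intro i hi1 hi2 s hs hall
    refine (hmid i hi1 hi2).1.2 (window_infix (v := row A i) (s := s) (by rw [row_length]; omega) ?_)
    intro r hr
    have h := hall r hr
    rwa [entry_eq_get A (by omega) (by omega)] at h
  case last_one =>
    intro j hj
    exact get1a j hj
  case last_trail =>
    intro j hj1 hj2
    exact get1c j (by omega) hj2
  case last_no_zeros_mid =>
    intro s hs1 hs2 hall
    refine hv1av.1 (window_infix (v := v1) (s := s - (g+k)) (by omega) ?_)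
    intro r hr
    have h := hall r hr
    rw [get1b (s+r) (by omega) (by omega)] at h
    exact (gidx _ _ (by omega)).trans h
  case lastcol =>
    intro i hi
    by_cases hi0 : i = 0
    · subst hi0
      exact get0c (n-1) (by omega) (by omega)
    by_cases him : i = m - 1
    · subst him
      exact get1c (n-1) (by omega) (by omega)
    · exact midlast i (by omega) (by omega)

lemma Facts.upper_no_zeros {m n k g : ℕ} {A : Fin m → Fin n → Bool} (F : Facts m n k g A)
    (i : ℕ) (hi : i + 1 < m) :
    ∀ s, s + k ≤ n → ¬(∀ r, r < k → entry A i (s+r) = false) := by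
  intro s hs
  rcases Nat.eq_zero_or_pos i with h0 | h1
  · subst h0; exact F.row0_no_zeros s hs
  · exact F.mid_no_zeros i h1 (by omega) s hs

lemma IsOverlap.symm {m n : ℕ} {A B : Fin m → Fin n → Bool} {p q : ℤ}
    (O : IsOverlap A B p q) : IsOverlap B A (-p) (-q) := by
  obtain ⟨hne, hp, hq, hmat⟩ := O
  refine ⟨by omega, by omega, by omega, ?_⟩
  intro i j i' j' hi hj
  exact (hmat i' j' i j (by omega) (by omega)).symm

lemma no_overlap_half {m n k gA gB : ℕ} {A B : Fin m → Fin n → Bool}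
    (hm : 2 ≤ m) (hk : 3 ≤ k) (hgA : gA + 2*k ≤ n) (hgB : gB + 2*k ≤ n)
    (hAB : gA ≤ gB + 1)
    (FA : Facts m n k gA A) (FB : Facts m n k gB B) (p q : ℤ)
    (hpq : 0 < p ∨ (p = 0 ∧ 0 < q)) (O : IsOverlap A B p q) : False := by
  have hne := O.1
  have hpm := O.2.1
  have hqm := O.2.2.1
  rcases hpq with hp | ⟨hp0, hq0⟩
  · -- p > 0
    set P := p.natAbs with hPdef
    have hp' : (P : ℤ) = p := by omega
    have hP1 : 1 ≤ P := by omega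
    have hPm : P ≤ m - 1 := hpm
    rcases le_or_gt 0 q with hq | hq
    · -- q ≥ 0
      set Q := q.natAbs with hQdef
      have hq' : (Q : ℤ) = q := by omega
      have hQn : Q ≤ n - 1 := hqm
      by_cases hQk : Q ≤ n - k
      · -- 0^k window in A's row m-1-P
        refine FA.upper_no_zeros (m-1-P) (by omega) (n-k-Q) (by omega) ?_
        intro r hr
        have e := use_overlap O (i := m-1-P) (j := n-k-Q+r) (i' := m-1) (j' := n-k+r)
          (by omega) (by omega) (by omega) (by omega) (by omega) (by omega)
        rw [e]
        exact FB.last_trail (n-k+r) (by omega) (by omega)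
      · -- Q > n-k : compare A(0, n-1-Q) with B(P, n-1)
        have e := use_overlap O (i := 0) (j := n-1-Q) (i' := P) (j' := n-1)
          (by omega) (by omega) (by omega) (by omega) (by omega) (by omega)
        rw [FA.row0_one (n-1-Q) (by omega), FB.lastcol P (by omega)] at e
        simp at e
    · -- q < 0
      set Q := q.natAbs with hQdef
      have hq' : (Q : ℤ) = -q := by omega
      have hQ1 : 1 ≤ Q := by omega
      have hQn : Q ≤ n - 1 := hqm
      by_cases hcase : n ≤ Q + gB + k
      · -- B's last-row prefix ones reach A's last column
        have e := use_overlap O (i := m-1-P) (j := n-1) (i' := m-1) (j' := n-1-Q)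
          (by omega) (by omega) (by omega) (by omega) (by omega) (by omega)
        rw [FA.lastcol (m-1-P) (by omega), FB.last_one (n-1-Q) (by omega)] at e
        simp at e
      · -- Q + gB + k < n : 1-window of length ≥ k in A's row m-1-P at offset Q
        have w1 : ∀ r, r < gB + k → entry A (m-1-P) (Q+r) = true := by
          intro r hr
          have e := use_overlap O (i := m-1-P) (j := Q+r) (i' := m-1) (j' := r)
            (by omega) (by omega) (by omega) (by omega) (by omega) (by omega)
          rw [e]
          exact FB.last_one r hr
        by_cases hmid : 1 ≤ m - 1 - P
        · exact FA.mid_no_ones (m-1-P) hmid (by omega) Q (by omega)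
            (fun r hr => w1 r (by omega))
        · -- P = m-1, row 0 of A
          have hP : m - 1 - P = 0 := by omega
          rw [hP] at w1
          by_cases hQa : Q ≤ gA + k - 1
          · have h := w1 (gA + k - 1 - Q) (by omega)
            rw [show Q + (gA + k - 1 - Q) = gA + k - 1 by omega, FA.row0_zero_at] at h
            simp at h
          · by_cases hQb : Q + k ≤ n - k + 1
            · exact FA.row0_no_ones_mid Q (by omega) hQb (fun r hr => w1 r (by omega))
            · have h := w1 (k-1) (by omega)
              rw [FA.row0_trail (Q + (k-1)) (by omega) (by omega)] at h
              simp at h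
  · -- p = 0, q > 0
    subst hp0
    set Q := q.natAbs with hQdef
    have hq' : (Q : ℤ) = q := by omega
    have hQ1 : 1 ≤ Q := by omega
    have hQn : Q ≤ n - 1 := hqm
    by_cases hQk : n - k ≤ Q
    · have e := use_overlap O (i := m-1) (j := 0) (i' := m-1) (j' := Q)
        (by omega) (by omega) (by omega) (by omega) (by omega) (by omega)
      rw [FA.last_one 0 (by omega), FB.last_trail Q (by omega) (by omega)] at e
      simp at e
    · -- Q < n-k
      have w : ∀ r, r < k → entry A (m-1) (n-k-Q+r) = false := by
        intro r hr
        have e := use_overlap O (i := m-1) (j := n-k-Q+r) (i' := m-1) (j' := n-k+r)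
          (by omega) (by omega) (by omega) (by omega) (by omega) (by omega)
        rw [e]
        exact FB.last_trail (n-k+r) (by omega) (by omega)
      have hsa : gA + k ≤ n - k - Q := by
        by_contra hc
        have h := w 0 (by omega)
        rw [Nat.add_zero, FA.last_one (n-k-Q) (by omega)] at h
        simp at h
      have hQk1 : Q ≤ k - 1 := by
        by_contra hc
        exact FA.last_no_zeros_mid (n-k-Q) hsa (by omega) w
      have e := use_overlap O (i := 0) (j := n-k) (i' := 0) (j' := n-k+Q)
        (by omega) (by omega) (by omega) (by omega) (by omega) (by omega)
      rw [FA.row0_one_at, FB.row0_trail (n-k+Q) (by omega) (by omega)] at e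
      simp at e

theorem SkhSet_union_succ_nonOverlapping (m n k h : ℕ) (hm : 2 ≤ m) (hk : 3 ≤ k)
    (hkn : k ≤ n / 2) (hn : 2 * k ≤ n) (hh : h < n - 2*k) :
    (∀ A ∈ SkhSet m n k h ∪ SkhSet m n k (h + 1), ¬ ∃ p q : ℤ, IsOverlap A A p q) ∧
    (∀ A ∈ SkhSet m n k h ∪ SkhSet m n k (h + 1),
      ∀ B ∈ SkhSet m n k h ∪ SkhSet m n k (h + 1),
        A ≠ B → ¬ ∃ p q : ℤ, IsOverlap A B p q) := by
  have key : ∀ A ∈ SkhSet m n k h ∪ SkhSet m n k (h + 1),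
      ∀ B ∈ SkhSet m n k h ∪ SkhSet m n k (h + 1), ¬ ∃ p q : ℤ, IsOverlap A B p q := by
    intro A hA B hB hex
    obtain ⟨p, q, O⟩ := hex
    have extract : ∀ C ∈ SkhSet m n k h ∪ SkhSet m n k (h + 1),
        ∃ g, h ≤ g ∧ g ≤ h + 1 ∧ g + 2*k ≤ n ∧ Facts m n k g C := by
      intro C hC
      rcases hC with hC | hC
      · exact ⟨h, le_refl _, by omega, by omega, facts_of_mem hm hk (by omega) hC⟩
      · exact ⟨h+1, by omega, le_refl _, by omega, facts_of_mem hm hk (by omega) hC⟩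
    obtain ⟨gA, hgA1, hgA2, hgA3, FA⟩ := extract A hA
    obtain ⟨gB, hgB1, hgB2, hgB3, FB⟩ := extract B hB
    rcases Int.lt_trichotomy p 0 with hp | hp | hp
    · exact no_overlap_half hm hk hgB3 hgA3 (by omega) FB FA (-p) (-q)
        (Or.inl (by omega)) O.symm
    · subst hp
      rcases Int.lt_trichotomy q 0 with hq | hq | hq
      · exact no_overlap_half hm hk hgB3 hgA3 (by omega) FB FA (-0) (-q)
          (Or.inr ⟨by omega, by omega⟩) O.symm
      · exact O.1 ⟨rfl, hq⟩
      · exact no_overlap_half hm hk hgA3 hgB3 (by omega) FA FB 0 q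
          (Or.inr ⟨rfl, hq⟩) O
    · exact no_overlap_half hm hk hgA3 hgB3 (by omega) FA FB p q (Or.inl hp) O
  exact ⟨fun A hA => key A hA A hA, fun A hA B hB _ => key A hA B hB⟩
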